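/- Let K be an origin-symmetric convex body in R^d, λ > 0, r > 0, and let Q = {q_1,...,q_N} ⊂ R^d satisfy ‖q_i − q_j‖_K ≤ λ for all i < j, with (d/(d+1))λ < r. Then V_d(Q_K^r) ≥ (r − (d/(d+1))λ)^d · V_d(K), where Q_K^r = ∩_i B_K[q_i, r]. -/

import Mathlib

open MeasureTheory Set
open scoped Pointwise

private lemma gauge_sum_le' {E : Type*} [AddCommGroup E] [Module ℝ E]
    {s : Set E} (hs : Convex ℝ s) (habs : Absorbent ℝ s)
    {ι : Type*} (I : Finset ι) (f : ι → E) :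
    gauge s (∑ j ∈ I, f j) ≤ ∑ j ∈ I, gauge s (f j) := by
  classical
  induction I using Finset.induction_on with
  | empty => simp [gauge_zero]
  | insert a t h ih =>
    rw [Finset.sum_insert h, Finset.sum_insert h]
    exact (gauge_add_le hs habs _ _).trans (by linarith)

/-- If all pairwise `K`-distances in `Q` are at most `λ` and
`(d/(d+1))·λ < r`, then (via Bohnenblust's theorem)
`V(Q_K^r) ≥ (r − (d/(d+1))·λ)^d · V(K)`. -/
theorem intersection_volume_lower_bound_Bohnenblust
    (d N : ℕ) (hd : 1 < d)
    (K : Set (EuclideanSpace ℝ (Fin d)))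
    (hKcomp : IsCompact K) (hKconv : Convex ℝ K)
    (hKint : (interior K).Nonempty) (hKsymm : ∀ x ∈ K, -x ∈ K)
    (r lam : ℝ) (hlam : 0 < lam) (hr0 : 0 < r)
    (hr : ((d : ℝ) / ((d : ℝ) + 1)) * lam < r)
    (q : Fin N → EuclideanSpace ℝ (Fin d))
    (hQ : ∀ i j, i ≠ j → gauge K (q i - q j) ≤ lam) :
    ENNReal.ofReal ((r - ((d : ℝ) / ((d : ℝ) + 1)) * lam) ^ d) * volume K ≤
      volume (⋂ i, ({q i} + r • K)) := by
  classical
  set ρ : ℝ := ((d : ℝ) / ((d : ℝ) + 1)) * lam with hρdef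
  have hdR : (0 : ℝ) < (d : ℝ) := by exact_mod_cast Nat.lt_of_lt_of_le Nat.zero_lt_one hd.le
  have hρpos : 0 < ρ := mul_pos (div_pos hdR (by linarith)) hlam
  have hρr : ρ < r := hr
  -- 0 is in the interior of K
  obtain ⟨x0, hx0⟩ := hKint
  have hKneg : -K = K := by
    ext y
    constructor
    · intro hy
      rw [Set.mem_neg] at hy
      simpa using hKsymm (-y) hy
    · intro hy
      rw [Set.mem_neg]
      exact hKsymm y hy
  have hx0' : -x0 ∈ interior K := by
    have hopen : IsOpen (-(interior K)) := isOpen_interior.neg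
    have hsub : -(interior K) ⊆ K := fun y hy => by
      simpa using hKsymm (-y) (interior_subset (Set.mem_neg.mp hy))
    exact interior_maximal hsub hopen (Set.neg_mem_neg.mpr hx0)
  have h0int : (0 : EuclideanSpace ℝ (Fin d)) ∈ interior K := by
    have h := hKconv.interior hx0 hx0' (by norm_num : (0:ℝ) ≤ 1/2)
      (by norm_num : (0:ℝ) ≤ 1/2) (by norm_num)
    simpa using h
  have hKnhds : K ∈ nhds (0 : EuclideanSpace ℝ (Fin d)) :=
    mem_interior_iff_mem_nhds.mp h0int
  have habs : Absorbent ℝ K := absorbent_nhds_zero hKnhds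
  have hgauge_mem : ∀ y, gauge K y ≤ ρ → y ∈ ρ • K := by
    intro y hy
    have h1 : gauge K (ρ⁻¹ • y) ≤ 1 := by
      rw [gauge_smul_of_nonneg (inv_nonneg.mpr hρpos.le), smul_eq_mul]
      calc ρ⁻¹ * gauge K y ≤ ρ⁻¹ * ρ := by
            exact mul_le_mul_of_nonneg_left hy (inv_nonneg.mpr hρpos.le)
        _ = 1 := inv_mul_cancel₀ hρpos.ne'
    have h2 := (gauge_le_one_iff_mem_closure hKconv hKnhds).mp h1
    rw [hKcomp.isClosed.closure_eq] at h2
    exact ⟨ρ⁻¹ • y, h2, smul_inv_smul₀ hρpos.ne' y⟩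
  -- Helly's theorem: find a common center
  set F : Fin N → Set (EuclideanSpace ℝ (Fin d)) := fun i => {q i} + ρ • K with hF
  have hFconv : ∀ i, Convex ℝ (F i) := fun i => (convex_singleton _).add (hKconv.smul _)
  have hFcomp : ∀ i, IsCompact (F i) := fun i => isCompact_singleton.add (hKcomp.smul _)
  have hinter : ∀ I : Finset (Fin N),
      I.card ≤ Module.finrank ℝ (EuclideanSpace ℝ (Fin d)) + 1 → (⋂ i ∈ I, F i).Nonempty := by
    intro I hIcard
    rw [finrank_euclideanSpace_fin] at hIcard
    rcases I.eq_empty_or_nonempty with rfl | hIne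
    · simp
    have hn : 0 < I.card := Finset.card_pos.mpr hIne
    have hnR : (1 : ℝ) ≤ I.card := by exact_mod_cast hn
    have hnpos : (0 : ℝ) < I.card := by linarith
    set c : EuclideanSpace ℝ (Fin d) := ((I.card : ℝ))⁻¹ • ∑ j ∈ I, q j with hc
    refine ⟨c, ?_⟩
    rw [Set.mem_iInter₂]
    intro i hi
    have hrepr : c - q i = ((I.card : ℝ))⁻¹ • ∑ j ∈ I, (q j - q i) := by
      rw [Finset.sum_sub_distrib, smul_sub, Finset.sum_const, hc]
      congr 1
      rw [← Nat.cast_smul_eq_nsmul ℝ, smul_smul, inv_mul_cancel₀ hnpos.ne', one_smul]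
    have key : gauge K (c - q i) ≤ ρ := by
      rw [hrepr, gauge_smul_of_nonneg (inv_nonneg.mpr hnpos.le), smul_eq_mul]
      have hsum : gauge K (∑ j ∈ I, (q j - q i)) ≤ ∑ j ∈ I, gauge K (q j - q i) :=
        gauge_sum_le' hKconv habs I _
      have hsum2 : ∑ j ∈ I, gauge K (q j - q i) ≤ ((I.card : ℝ) - 1) * lam := by
        have hle : ∀ j ∈ I, gauge K (q j - q i) ≤ if j = i then 0 else lam := by
          intro j hj
          by_cases hji : j = i
          · simp [hji, gauge_zero]
          · simpa [hji] using hQ j i hji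
        calc ∑ j ∈ I, gauge K (q j - q i) ≤ ∑ j ∈ I, (if j = i then 0 else lam) :=
              Finset.sum_le_sum hle
          _ = ∑ j ∈ I, (lam - if j = i then lam else 0) := by
              apply Finset.sum_congr rfl; intro j _; by_cases hji : j = i <;> simp [hji]
          _ = (I.card : ℝ) * lam - lam := by
              rw [Finset.sum_sub_distrib, Finset.sum_const, Finset.sum_ite_eq' I i fun _ => lam,
                if_pos hi, nsmul_eq_mul]
          _ = ((I.card : ℝ) - 1) * lam := by ring
      have hcard' : (I.card : ℝ) ≤ (d : ℝ) + 1 := by exact_mod_cast hIcard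
      have hstep : ((I.card : ℝ))⁻¹ * (((I.card : ℝ) - 1) * lam) ≤ ρ := by
        rw [inv_mul_le_iff₀ hnpos, hρdef, div_mul_eq_mul_div, ← mul_div_assoc,
          le_div_iff₀ (by linarith : (0:ℝ) < (d : ℝ) + 1)]
        have h1 : ((I.card : ℝ) - 1) * ((d : ℝ) + 1) ≤ (I.card : ℝ) * (d : ℝ) := by nlinarith
        nlinarith [mul_le_mul_of_nonneg_right h1 hlam.le]
      calc ((I.card : ℝ))⁻¹ * gauge K (∑ j ∈ I, (q j - q i))
          ≤ ((I.card : ℝ))⁻¹ * (((I.card : ℝ) - 1) * lam) := by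
            exact mul_le_mul_of_nonneg_left (hsum.trans hsum2) (inv_nonneg.mpr hnpos.le)
        _ ≤ ρ := hstep
    have hmem : c - q i ∈ ρ • K := hgauge_mem _ key
    have hmm := Set.add_mem_add (Set.mem_singleton (q i)) hmem
    have h3 : q i + (c - q i) = c := by abel
    have hgoal : c ∈ {q i} + ρ • K := by rw [← h3]; exact hmm
    exact hgoal
  obtain ⟨c, hcmem⟩ := Convex.helly_theorem_compact' (𝕜 := ℝ) hFconv hFcomp hinter
  -- the small ball around c is contained in the intersection
  have hsubset : {c} + (r - ρ) • K ⊆ ⋂ i, ({q i} + r • K) := by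
    intro x hx
    obtain ⟨c2, hc2, z, hz, rfl⟩ := hx
    have hc2' : c2 = c := hc2
    rw [Set.mem_iInter]
    intro i
    have hci : c ∈ F i := Set.mem_iInter.mp hcmem i
    obtain ⟨qi', hq1, y, hy, hcy⟩ := hci
    have hq1' : qi' = q i := hq1
    have hcy' : q i + y = c := by rw [← hq1']; exact hcy
    have hmem2 : y + z ∈ r • K := by
      have : r • K = ρ • K + (r - ρ) • K := by
        rw [← hKconv.add_smul hρpos.le (by linarith : (0:ℝ) ≤ r - ρ)]
        norm_num
      rw [this]
      exact Set.add_mem_add hy hz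
    have hfin := Set.add_mem_add (Set.mem_singleton (q i)) hmem2
    have heq : q i + (y + z) = c2 + z := by rw [← add_assoc, hcy', hc2']
    rw [heq] at hfin
    exact hfin
  calc ENNReal.ofReal ((r - ρ) ^ d) * volume K
      = volume ({c} + (r - ρ) • K) := by
        have h1 : volume ({c} + (r - ρ) • K) = volume ((r - ρ) • K) := by
          simp [Set.singleton_add, image_add_left, measure_preimage_add]
        rw [h1, Measure.addHaar_smul, finrank_euclideanSpace_fin,
          abs_of_pos (pow_pos (by linarith : (0:ℝ) < r - ρ) d)]
    _ ≤ volume (⋂ i, ({q i} + r • K)) := measure_mono hsubset
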